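/- Let φ : X → 𝒫(X)∖{∅} be continuous and C ⊆ X nonempty compact. Then for every ε > 0 there exists δ > 0 such that for every nonempty B ⊆ N_δ(C) one has φ(N_δ(B)) ⊆ N_ε(φ(B)). -/

import Mathlib

theorem cantor_weierstrass_uniform_continuity_II {X : Type*} [MetricSpace X]
    (φ : X → Set X) (hne : ∀ x, (φ x).Nonempty)
    (hcont : ∀ x₀, ∀ ε > (0 : ℝ), ∃ δ > (0 : ℝ), ∀ x, dist x x₀ < δ →
      EMetric.hausdorffEdist (φ x) (φ x₀) < ENNReal.ofReal ε)
    (C : Set X) (hC : C.Nonempty) (hCc : IsCompact C) :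
    ∀ ε > (0 : ℝ), ∃ δ > (0 : ℝ), ∀ B : Set X, B.Nonempty →
      B ⊆ Metric.thickening δ C →
      (⋃ x ∈ Metric.thickening δ B, φ x) ⊆
        Metric.thickening ε (⋃ b ∈ B, φ b) := by
  intro ε hε
  have hε2 : (0:ℝ) < ε / 2 := by linarith
  choose d hd hdprop using fun c => hcont c (ε / 2) hε2
  obtain ⟨t, htC, hcov⟩ := hCc.elim_nhds_subcover (fun c => Metric.ball c (d c / 3))
    (fun c _ => Metric.isOpen_ball.mem_nhds (Metric.mem_ball_self (by have := hd c; linarith)))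
  obtain ⟨c₀, hc₀⟩ := hC
  have ht : t.Nonempty := by
    rcases Set.mem_iUnion₂.1 (hcov hc₀) with ⟨c, hc, -⟩
    exact ⟨c, hc⟩
  set δ : ℝ := t.inf' ht (fun c => d c / 3) with hδdef
  have hδpos : 0 < δ := by
    apply (Finset.lt_inf'_iff ht).2
    intro c hc
    have := hd c; linarith
  refine ⟨δ, hδpos, ?_⟩
  intro B hBne hBsub y hy
  rcases Set.mem_iUnion₂.1 hy with ⟨x, hx, hyx⟩
  rcases Metric.mem_thickening_iff.1 hx with ⟨b, hbB, hxb⟩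
  rcases Metric.mem_thickening_iff.1 (hBsub hbB) with ⟨c, hcC, hbc⟩
  rcases Set.mem_iUnion₂.1 (hcov hcC) with ⟨ci, hci, hcball⟩
  have hδle : δ ≤ d ci / 3 := Finset.inf'_le _ hci
  have hcci : dist c ci < d ci / 3 := Metric.mem_ball.1 hcball
  have hbci : dist b ci < 2 * d ci / 3 := by
    calc dist b ci ≤ dist b c + dist c ci := dist_triangle _ _ _
      _ < δ + d ci / 3 := by linarith
      _ ≤ 2 * d ci / 3 := by linarith
  have hxci : dist x ci < d ci := by
    calc dist x ci ≤ dist x b + dist b ci := dist_triangle _ _ _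
      _ < δ + 2 * d ci / 3 := by linarith
      _ ≤ d ci := by linarith
  have h1 := hdprop ci x hxci
  have h2 := hdprop ci b (by linarith : dist b ci < d ci)
  have hxb' : EMetric.hausdorffEdist (φ x) (φ b) < ENNReal.ofReal ε := by
    calc EMetric.hausdorffEdist (φ x) (φ b)
        ≤ EMetric.hausdorffEdist (φ x) (φ ci) + EMetric.hausdorffEdist (φ ci) (φ b) :=
          EMetric.hausdorffEdist_triangle
      _ < ENNReal.ofReal (ε / 2) + ENNReal.ofReal (ε / 2) := by
          rw [EMetric.hausdorffEdist, EMetric.hausdorffEdist_comm] at h2; exact ENNReal.add_lt_add h1 h2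
      _ = ENNReal.ofReal ε := by
          rw [← ENNReal.ofReal_add (by linarith) (by linarith)]; norm_num
  have hyb : EMetric.infEdist y (φ b) < ENNReal.ofReal ε :=
    lt_of_le_of_lt (EMetric.infEdist_le_hausdorffEdist_of_mem hyx) hxb'
  have hsub : φ b ⊆ ⋃ b ∈ B, φ b := Set.subset_iUnion₂ (s := fun b _ => φ b) b hbB
  exact Metric.mem_thickening_iff_infEdist_lt.2
    (lt_of_le_of_lt (EMetric.infEdist_anti hsub) hyb)
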